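/- For a complete multipartite graph K_{p_1,...,p_k} with k ≥ 2 parts which is not a star K_{1,p} with p ≥ 2, the minimum MEG-set is the entire vertex set, i.e., MEG(K_{p_1,...,p_k}) = p_1 + ... + p_k. For the star K_{1,p}, MEG(K_{1,p}) = p. -/

import Mathlib

open SimpleGraph

/-- Two vertices `x` and `y` monitor an edge `e` in `G`: there is a shortest path between
them, and `e` lies on every shortest path between `x` and `y`. -/
def Monitors {V : Type*} (G : SimpleGraph V) (x y : V) (e : Sym2 V) : Prop :=
  (∃ p : G.Walk x y, p.IsPath ∧ p.length = G.dist x y) ∧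
    ∀ p : G.Walk x y, p.IsPath → p.length = G.dist x y → e ∈ p.edges

/-- `S` is a monitoring edge-geodetic set of `G`. -/
def IsMEGSet {V : Type*} (G : SimpleGraph V) (S : Set V) : Prop :=
  ∀ e ∈ G.edgeSet, ∃ x ∈ S, ∃ y ∈ S, Monitors G x y e

/-- The minimum size of a monitoring edge-geodetic set of `G`. -/
noncomputable def megNum {V : Type*} (G : SimpleGraph V) : ℕ :=
  sInf {n | ∃ S : Set V, IsMEGSet G S ∧ S.ncard = n}

/-- The set of leaves (degree-1 vertices) of `G`. -/
def leaves {V : Type*} (G : SimpleGraph V) : Set V :=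
  {v | (G.neighborSet v).ncard = 1}

/-! ### Auxiliary lemmas -/

section WalkAux

variable {V : Type*} {G : SimpleGraph V} {x y : V}

lemma edges_of_length_one (q : G.Walk x y) (h : q.length = 1) :
    q.edges = [s(x, y)] := by
  cases q with
  | nil => simp at h
  | cons hadj q' =>
    cases q' with
    | nil => simp
    | cons h2 q'' => simp [SimpleGraph.Walk.length_cons] at h

lemma edges_of_length_two (q : G.Walk x y) (h : q.length = 2) :
    ∃ c, G.Adj x c ∧ G.Adj c y ∧ q.edges = [s(x, c), s(c, y)] := by
  cases q with
  | nil => simp at h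
  | cons hadj q' =>
    cases q' with
    | nil => simp at h
    | cons h2 q'' =>
      cases q'' with
      | nil => exact ⟨_, hadj, h2, by simp⟩
      | cons h3 q''' => simp [SimpleGraph.Walk.length_cons] at h

lemma exists_shortest_path (h : G.Reachable x y) :
    ∃ q : G.Walk x y, q.IsPath ∧ q.length = G.dist x y := by
  classical
  obtain ⟨w, hw⟩ := h.exists_walk_length_eq_dist
  exact ⟨w.bypass, w.bypass_isPath,
    le_antisymm (le_trans w.length_bypass_le (le_of_eq hw)) (SimpleGraph.dist_le _)⟩

lemma Monitors.ne_of_monitors {e : Sym2 V} (h : Monitors G x y e) : x ≠ y := by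
  rintro rfl
  simpa using h.2 SimpleGraph.Walk.nil (by simp) (by simp [SimpleGraph.dist_self])

lemma path_two {c : V} (h1 : G.Adj x c) (h2 : G.Adj c y) (hxy : x ≠ y) :
    (SimpleGraph.Walk.cons h1 (SimpleGraph.Walk.cons h2 SimpleGraph.Walk.nil)).IsPath := by
  simp [SimpleGraph.Walk.isPath_def, h1.ne, h2.ne, hxy]

end WalkAux

lemma sigma_ne_of_fst_ne {α : Type*} {β : α → Type*} {a b : Σ i, β i}
    (h : a.1 ≠ b.1) : a ≠ b :=
  fun he => h (congrArg Sigma.fst he)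

lemma fin_two_eq {k : ℕ} {a b c : Fin k} (hk2 : k = 2) (h1 : a ≠ b) (h2 : a ≠ c) : b = c := by
  have ha := a.isLt; have hb := b.isLt; have hc := c.isLt
  have h1' : a.val ≠ b.val := fun h => h1 (Fin.ext h)
  have h2' : a.val ≠ c.val := fun h => h2 (Fin.ext h)
  exact Fin.ext (by omega)

section CMP

variable {k : ℕ} {p : Fin k → ℕ}

/-- Abbreviation for the complete multipartite graph with parts `Fin (p i)`. -/
abbrev MG (p : Fin k → ℕ) : SimpleGraph (Σ i, Fin (p i)) :=
  completeMultipartiteGraph fun i => Fin (p i)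

lemma MG_adj {x y : Σ i, Fin (p i)} : (MG p).Adj x y ↔ x.1 ≠ y.1 := Iff.rfl

lemma two_le_part {x y : Σ i, Fin (p i)} (h1 : x.1 = y.1) (h2 : x ≠ y) : 2 ≤ p x.1 := by
  obtain ⟨i, a⟩ := x
  obtain ⟨j, b⟩ := y
  dsimp at h1
  subst h1
  have hab : a.val ≠ b.val := by
    intro h
    exact h2 (congrArg (Sigma.mk i) (Fin.ext h))
  have := a.isLt; have := b.isLt
  dsimp
  omega

lemma eq_of_part_one {x y : Σ i, Fin (p i)} {i : Fin k} (hx : x.1 = i) (hy : y.1 = i)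
    (h1 : p i = 1) : x = y := by
  obtain ⟨ix, a⟩ := x
  obtain ⟨iy, b⟩ := y
  dsimp at hx hy
  subst hx; subst hy
  have := a.isLt; have := b.isLt
  exact congrArg (Sigma.mk _) (Fin.ext (by omega))

variable (hk : 2 ≤ k) (hp : ∀ i, 1 ≤ p i)

include hk in
lemma exists_other_part (i : Fin k) : ∃ j : Fin k, j ≠ i := by
  have h1 : 1 < Fintype.card (Fin k) := by rw [Fintype.card_fin]; omega
  exact Fintype.exists_ne_of_one_lt_card h1 i

include hk hp in
lemma MG_reach (x y : Σ i, Fin (p i)) : (MG p).Reachable x y := by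
  by_cases hxy : x = y
  · exact hxy ▸ SimpleGraph.Reachable.refl x
  by_cases h : x.1 = y.1
  · obtain ⟨j, hj⟩ := exists_other_part hk x.1
    have hc1 : (MG p).Adj x ⟨j, ⟨0, hp j⟩⟩ := MG_adj.mpr (Ne.symm hj)
    have hc2 : (MG p).Adj ⟨j, ⟨0, hp j⟩⟩ y := MG_adj.mpr (h ▸ hj)
    exact ⟨SimpleGraph.Walk.cons hc1 (SimpleGraph.Walk.cons hc2 SimpleGraph.Walk.nil)⟩
  · exact ⟨SimpleGraph.Walk.cons (MG_adj.mpr h) SimpleGraph.Walk.nil⟩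

include hk hp in
lemma MG_dist_le_two (x y : Σ i, Fin (p i)) : (MG p).dist x y ≤ 2 := by
  by_cases h : x.1 = y.1
  · obtain ⟨j, hj⟩ := exists_other_part hk x.1
    have hc1 : (MG p).Adj x ⟨j, ⟨0, hp j⟩⟩ := MG_adj.mpr (Ne.symm hj)
    have hc2 : (MG p).Adj ⟨j, ⟨0, hp j⟩⟩ y := MG_adj.mpr (h ▸ hj)
    have := SimpleGraph.dist_le
      (SimpleGraph.Walk.cons hc1 (SimpleGraph.Walk.cons hc2 SimpleGraph.Walk.nil))
    simpa using this
  · have := SimpleGraph.dist_le (SimpleGraph.Walk.cons (MG_adj.mpr h) SimpleGraph.Walk.nil)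
    simp at this
    omega

include hk hp in
lemma MG_dist_same {x y : Σ i, Fin (p i)} (h1 : x.1 = y.1) (h2 : x ≠ y) :
    (MG p).dist x y = 2 := by
  have hle := MG_dist_le_two hk hp x y
  have h0 : (MG p).dist x y ≠ 0 :=
    fun h => h2 ((MG_reach hk hp x y).dist_eq_zero_iff.mp h)
  have h1' : (MG p).dist x y ≠ 1 :=
    fun h => (MG_adj.mp (SimpleGraph.dist_eq_one_iff_adj.mp h)) h1
  omega

lemma monitors_adj {x y : Σ i, Fin (p i)} (h : (MG p).Adj x y) :
    Monitors (MG p) x y s(x, y) := by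
  have hd : (MG p).dist x y = 1 := SimpleGraph.dist_eq_one_iff_adj.mpr h
  constructor
  · exact ⟨SimpleGraph.Walk.cons h SimpleGraph.Walk.nil,
      by simp [SimpleGraph.Walk.isPath_def, h.ne], by simp [hd]⟩
  · intro q hq hlen
    rw [edges_of_length_one q (by rw [hlen, hd])]
    simp

include hk hp in
lemma two_outside (hns : ¬(k = 2 ∧ ∃ i j : Fin k, i ≠ j ∧ p i = 1 ∧ 2 ≤ p j))
    {i : Fin k} (hpi : 2 ≤ p i) :
    ∃ c c' : Σ i, Fin (p i), c ≠ c' ∧ c.1 ≠ i ∧ c'.1 ≠ i := by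
  obtain ⟨j, hj⟩ := exists_other_part hk i
  by_cases h2 : 2 ≤ p j
  · refine ⟨⟨j, ⟨0, by omega⟩⟩, ⟨j, ⟨1, by omega⟩⟩, ?_, hj, hj⟩
    intro h
    have := congrArg (fun z : Σ i, Fin (p i) => (z.2 : ℕ)) h
    simp at this
  · have hpj : p j = 1 := le_antisymm (by omega) (hp j)
    have hk3 : 3 ≤ k := by
      by_contra h
      have hk2 : k = 2 := by omega
      exact hns ⟨hk2, j, i, hj, hpj, hpi⟩
    have hne : (({i, j} : Finset (Fin k))ᶜ).Nonempty := by
      rw [← Finset.card_pos, Finset.card_compl]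
      have hle : ({i, j} : Finset (Fin k)).card ≤ 2 :=
        le_trans (Finset.card_insert_le _ _) (by simp)
      simp only [Fintype.card_fin]
      omega
    obtain ⟨j', hj'⟩ := hne
    simp only [Finset.mem_compl, Finset.mem_insert, Finset.mem_singleton, not_or] at hj'
    refine ⟨⟨j, ⟨0, by omega⟩⟩, ⟨j', ⟨0, hp j'⟩⟩, ?_, hj, hj'.1⟩
    exact sigma_ne_of_fst_ne (fun h => hj'.2 (by simpa using h.symm))

include hk hp in
lemma monitor_pair_eq (hns : ¬(k = 2 ∧ ∃ i j : Fin k, i ≠ j ∧ p i = 1 ∧ 2 ≤ p j))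
    {x y u v : Σ i, Fin (p i)} (hm : Monitors (MG p) x y s(u, v)) :
    u = x ∨ u = y := by
  have hxy : x ≠ y := hm.ne_of_monitors
  have hle := MG_dist_le_two hk hp x y
  have h0 : (MG p).dist x y ≠ 0 :=
    fun h => hxy ((MG_reach hk hp x y).dist_eq_zero_iff.mp h)
  rcases (show (MG p).dist x y = 1 ∨ (MG p).dist x y = 2 by omega) with hd | hd
  · -- dist = 1 : adjacent
    have hadj : (MG p).Adj x y := SimpleGraph.dist_eq_one_iff_adj.mp hd
    have := hm.2 (SimpleGraph.Walk.cons hadj SimpleGraph.Walk.nil)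
      (by simp [SimpleGraph.Walk.isPath_def, hadj.ne]) (by simp [hd])
    simp only [SimpleGraph.Walk.edges_cons, SimpleGraph.Walk.edges_nil,
      List.mem_singleton] at this
    rcases Sym2.eq_iff.mp this with ⟨h1, h2⟩ | ⟨h1, h2⟩
    · exact Or.inl h1
    · exact Or.inr h1
  · -- dist = 2
    exfalso
    have hnadj : ¬(MG p).Adj x y := by
      intro h
      rw [← SimpleGraph.dist_eq_one_iff_adj] at h
      omega
    have hsame : x.1 = y.1 := not_not.mp (fun h => hnadj (MG_adj.mpr h))
    have hpi : 2 ≤ p x.1 := two_le_part hsame hxy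
    obtain ⟨c, c', hcc, hc, hc'⟩ := two_outside hk hp hns hpi
    have hxc : (MG p).Adj x c := MG_adj.mpr (Ne.symm hc)
    have hcy : (MG p).Adj c y := MG_adj.mpr (fun h => hc (h.trans hsame.symm))
    have hxc' : (MG p).Adj x c' := MG_adj.mpr (Ne.symm hc')
    have hc'y : (MG p).Adj c' y := MG_adj.mpr (fun h => hc' (h.trans hsame.symm))
    have hm1 := hm.2 (SimpleGraph.Walk.cons hxc (SimpleGraph.Walk.cons hcy SimpleGraph.Walk.nil))
      (path_two hxc hcy hxy) (by simp [hd])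
    have hm2 := hm.2
      (SimpleGraph.Walk.cons hxc' (SimpleGraph.Walk.cons hc'y SimpleGraph.Walk.nil))
      (path_two hxc' hc'y hxy) (by simp [hd])
    simp only [SimpleGraph.Walk.edges_cons, SimpleGraph.Walk.edges_nil, List.mem_cons,
      List.mem_singleton, List.not_mem_nil, or_false] at hm1 hm2
    have hycne : y ≠ c := sigma_ne_of_fst_ne (fun h => hc (hsame ▸ h).symm)
    have hycne' : y ≠ c' := sigma_ne_of_fst_ne (fun h => hc' (hsame ▸ h).symm)
    have hxcne : x ≠ c := hxc.ne
    have hxcne' : x ≠ c' := hxc'.ne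
    rcases hm1 with h1 | h1 <;> rcases hm2 with h2 | h2 <;>
      rcases Sym2.eq_iff.mp (h1.symm.trans h2) with ⟨e1, e2⟩ | ⟨e1, e2⟩
    · exact hcc e2
    · exact hxcne' e1
    · exact hxcne' e1
    · exact hxy e1
    · exact hxcne e1.symm
    · exact hcc e1
    · exact hcc e1
    · exact hycne' e2

/-- The equivalence between a part and `Fin (p j)`. -/
def partEquiv (j : Fin k) : { v : Σ i, Fin (p i) // v.1 = j } ≃ Fin (p j) where
  toFun v := Fin.cast (congrArg p v.2) v.1.2
  invFun b := ⟨⟨j, b⟩, rfl⟩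
  left_inv := by rintro ⟨⟨i, b⟩, h⟩; dsimp at h; subst h; rfl
  right_inv b := rfl

lemma ncard_part (j : Fin k) : {v : Σ i, Fin (p i) | v.1 = j}.ncard = p j := by
  rw [← Nat.card_coe_set_eq, Set.coe_setOf, Nat.card_congr (partEquiv j)]
  simp

end CMP

theorem completeMultipartite_MEG (k : ℕ) (p : Fin k → ℕ) (hk : 2 ≤ k)
    (hp : ∀ i, 1 ≤ p i) :
    (¬ (k = 2 ∧ ∃ i j : Fin k, i ≠ j ∧ p i = 1 ∧ 2 ≤ p j) →
      megNum (completeMultipartiteGraph fun i => Fin (p i)) = ∑ i, p i) ∧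
    ((k = 2 ∧ ∃ i j : Fin k, i ≠ j ∧ p i = 1 ∧ 2 ≤ p j) →
      megNum (completeMultipartiteGraph fun i => Fin (p i)) = (∑ i, p i) - 1) := by
  constructor
  · -- non-star case
    intro hns
    have hcard : (Set.univ : Set (Σ i, Fin (p i))).ncard = ∑ i, p i := by
      rw [Set.ncard_univ, Nat.card_eq_fintype_card]
      simp
    have hmeg : IsMEGSet (MG p) Set.univ := by
      intro e
      induction e with
      | h u v =>
        intro he
        exact ⟨u, Set.mem_univ u, v, Set.mem_univ v, monitors_adj (((MG p).mem_edgeSet.mp he))⟩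
    apply le_antisymm
    · exact Nat.sInf_le ⟨Set.univ, hmeg, hcard⟩
    · apply le_csInf
      · exact ⟨∑ i, p i, Set.univ, hmeg, hcard⟩
      rintro n ⟨S, hS, rfl⟩
      have hSuniv : S = Set.univ := by
        rw [Set.eq_univ_iff_forall]
        intro u
        obtain ⟨j, hj⟩ := exists_other_part hk u.1
        have hadj : (MG p).Adj u ⟨j, ⟨0, hp j⟩⟩ := MG_adj.mpr (Ne.symm hj)
        obtain ⟨x, hx, y, hy, hmon⟩ := hS s(u, ⟨j, ⟨0, hp j⟩⟩) ((MG p).mem_edgeSet.mpr hadj)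
        rcases monitor_pair_eq hk hp hns hmon with h | h
        · exact h ▸ hx
        · exact h ▸ hy
      rw [hSuniv, hcard]
  · -- star case
    rintro ⟨hk2, i0, j0, hij, hpi, hpj⟩
    set c0 : Σ i, Fin (p i) := ⟨i0, ⟨0, by omega⟩⟩ with hc0
    have hc0fst : c0.1 = i0 := rfl
    -- the set of leaves
    set S : Set (Σ i, Fin (p i)) := {v | v.1 = j0} with hSdef
    have hScard : S.ncard = p j0 := ncard_part j0
    -- every vertex of the big part must lie in every MEG-set
    have hlower : ∀ S' : Set (Σ i, Fin (p i)), IsMEGSet (MG p) S' →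
        ∀ a : Σ i, Fin (p i), a.1 = j0 → a ∈ S' := by
      intro S' hS' a ha
      have hadj : (MG p).Adj c0 a := MG_adj.mpr (by rw [hc0fst, ha]; exact hij)
      obtain ⟨x, hx, y, hy, hm⟩ := hS' s(c0, a) ((MG p).mem_edgeSet.mpr hadj)
      have hxy : x ≠ y := hm.ne_of_monitors
      have hle := MG_dist_le_two hk hp x y
      have h0 : (MG p).dist x y ≠ 0 :=
        fun h => hxy ((MG_reach hk hp x y).dist_eq_zero_iff.mp h)
      have hax : a = x ∨ a = y := by
        rcases (by omega : (MG p).dist x y = 1 ∨ (MG p).dist x y = 2) with hd | hd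
        · -- dist 1
          have hadj' : (MG p).Adj x y := SimpleGraph.dist_eq_one_iff_adj.mp hd
          have := hm.2 (SimpleGraph.Walk.cons hadj' SimpleGraph.Walk.nil)
            (by simp [SimpleGraph.Walk.isPath_def, hadj'.ne]) (by simp [hd])
          simp only [SimpleGraph.Walk.edges_cons, SimpleGraph.Walk.edges_nil,
            List.mem_singleton] at this
          rcases Sym2.eq_iff.mp this with ⟨h1, h2⟩ | ⟨h1, h2⟩
          · exact Or.inr h2
          · exact Or.inl h2
        · -- dist 2 : x, y in the big part, paths go through c0
          have hnadj : ¬(MG p).Adj x y := by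
            intro h
            rw [← SimpleGraph.dist_eq_one_iff_adj] at h
            omega
          have hsame : x.1 = y.1 := not_not.mp (fun h => hnadj (MG_adj.mpr h))
          have hx1 : x.1 ≠ i0 := by
            intro h
            exact hxy (eq_of_part_one h (hsame ▸ h) hpi)
          have hxc0 : (MG p).Adj x c0 := MG_adj.mpr (by rw [hc0fst]; exact hx1)
          have hc0y : (MG p).Adj c0 y := MG_adj.mpr
            (by rw [hc0fst]; exact fun h => hx1 (hsame.trans h.symm))
          have := hm.2
            (SimpleGraph.Walk.cons hxc0 (SimpleGraph.Walk.cons hc0y SimpleGraph.Walk.nil))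
            (path_two hxc0 hc0y hxy) (by simp [hd])
          simp only [SimpleGraph.Walk.edges_cons, SimpleGraph.Walk.edges_nil, List.mem_cons,
            List.mem_singleton, List.not_mem_nil, or_false] at this
          have hac0 : a ≠ c0 := sigma_ne_of_fst_ne (by rw [ha, hc0fst]; exact fun h => hij h.symm)
          rcases this with h1 | h1
          · rcases Sym2.eq_iff.mp h1 with ⟨e1, e2⟩ | ⟨e1, e2⟩
            · exact absurd e2 hac0
            · exact Or.inl e2
          · rcases Sym2.eq_iff.mp h1 with ⟨e1, e2⟩ | ⟨e1, e2⟩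
            · exact Or.inr e2
            · exact absurd e2 hac0
      rcases hax with h | h
      · exact h ▸ hx
      · exact h ▸ hy
    -- S is a MEG-set
    have hmegS : IsMEGSet (MG p) S := by
      intro e
      have key : ∀ u v : Σ i, Fin (p i), u.1 = i0 → v.1 = j0 →
          ∃ x ∈ S, ∃ y ∈ S, Monitors (MG p) x y s(u, v) := by
        intro u v hu hv
        obtain ⟨m, v2⟩ := v
        dsimp at hv
        subst hv
        have : Nontrivial (Fin (p m)) := Fin.nontrivial_iff_two_le.mpr hpj
        obtain ⟨b, hb⟩ := exists_ne v2
        refine ⟨⟨m, v2⟩, rfl, ⟨m, b⟩, rfl, ?_, ?_⟩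
        · exact exists_shortest_path (MG_reach hk hp _ _)
        · intro q hq hlen
          have hne : (⟨m, v2⟩ : Σ i, Fin (p i)) ≠ ⟨m, b⟩ := by
            intro h
            exact hb (by
              have := congrArg (fun z : Σ i, Fin (p i) => (z.2 : ℕ)) h
              exact Fin.ext this.symm)
          have hd : (MG p).dist (⟨m, v2⟩ : Σ i, Fin (p i)) ⟨m, b⟩ = 2 :=
            MG_dist_same hk hp rfl hne
          obtain ⟨c, hvc, hcb, hedges⟩ := edges_of_length_two q (by rw [hlen, hd])
          have hc1 : c.1 ≠ m := fun h => (MG_adj.mp hvc) h.symm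
          have hci0 : c.1 = i0 := fin_two_eq hk2 (Ne.symm hc1) (Ne.symm hij)
          have hcu : c = u := eq_of_part_one hci0 hu hpi
          subst hcu
          rw [hedges]
          exact List.mem_cons.mpr (Or.inl Sym2.eq_swap)
      induction e with
      | h u v =>
        intro he
        have hadj : u.1 ≠ v.1 := ((MG p).mem_edgeSet.mp he)
        have hparts : ∀ m : Fin k, m = i0 ∨ m = j0 := by
          intro m
          have h1 := m.isLt
          have h2 := i0.isLt
          have h3 := j0.isLt
          have h4 : i0.val ≠ j0.val := fun h => hij (Fin.ext h)
          have : m.val = i0.val ∨ m.val = j0.val := by omega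
          rcases this with h | h
          · exact Or.inl (Fin.ext h)
          · exact Or.inr (Fin.ext h)
        rcases hparts u.1 with hu | hu
        · have hv : v.1 = j0 := fin_two_eq hk2 (hu ▸ hadj) hij
          exact key u v hu hv
        · have hv : v.1 = i0 := fin_two_eq hk2 (hu ▸ hadj) (Ne.symm hij)
          rw [show s(u, v) = s(v, u) from Sym2.eq_swap]
          exact key v u hv hu
    -- conclude
    have hmeg_eq : megNum (MG p) = p j0 := by
      apply le_antisymm
      · exact Nat.sInf_le ⟨S, hmegS, hScard⟩
      · apply le_csInf
        · exact ⟨p j0, S, hmegS, hScard⟩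
        rintro n ⟨S', hS', rfl⟩
        have hsub : {v : Σ i, Fin (p i) | v.1 = j0} ⊆ S' := fun a ha => hlower S' hS' a ha
        calc p j0 = ({v : Σ i, Fin (p i) | v.1 = j0}).ncard := (ncard_part j0).symm
          _ ≤ S'.ncard := Set.ncard_le_ncard hsub (Set.toFinite S')
    have hvals : (i0.val = 0 ∧ j0.val = 1) ∨ (i0.val = 1 ∧ j0.val = 0) := by
      have h1 := i0.isLt
      have h2 := j0.isLt
      have h4 : i0.val ≠ j0.val := fun h => hij (Fin.ext h)
      omega
    have hsum : ∑ i, p i = p i0 + p j0 := by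
      subst hk2
      rw [Fin.sum_univ_two]
      rcases hvals with ⟨h1, h2⟩ | ⟨h1, h2⟩
      · rw [show i0 = 0 from Fin.ext h1, show j0 = 1 from Fin.ext h2]
      · rw [show i0 = 1 from Fin.ext h1, show j0 = 0 from Fin.ext h2]
        exact Nat.add_comm _ _
    rw [hmeg_eq, hsum, hpi]
    omega
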